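/- Let p be a prime with p ≥ 5, let k ≥ 1, and set s = (p−1)·k. Then the p-adic valuation of the denominator (in lowest terms) of the rational number B_s/(2s) equals ν_p(k) + 1, where B_s is the s-th Bernoulli number. -/

import Mathlib

open Finset

private lemma five_pow_aux : ∀ v : ℕ, 1 ≤ v → v + 2 ≤ 5 ^ v := by
  intro v hv
  induction v with
  | zero => omega
  | succ n ih =>
    rcases Nat.eq_or_lt_of_le hv with h | h
    · simp [← h]
    · have h1 : 1 ≤ n := by omega
      have := ih h1
      have : 5 ^ n + 1 ≤ 5 ^ (n + 1) := by
        have : 1 ≤ 5 ^ n := Nat.one_le_pow _ _ (by norm_num)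
        calc 5 ^ n + 1 ≤ 5 ^ n * 5 := by omega
          _ = 5 ^ (n + 1) := by ring
      omega

private lemma val_le_sub_two (p : ℕ) [hp : Fact p.Prime] (hp5 : 5 ≤ p) {j : ℕ}
    (hj : 2 ≤ j) : padicValNat p j + 2 ≤ j := by
  set v := padicValNat p j with hv
  have hdvd : p ^ v ∣ j := pow_padicValNat_dvd
  have hle : p ^ v ≤ j := Nat.le_of_dvd (by omega) hdvd
  rcases Nat.eq_zero_or_pos v with h0 | h1
  · omega
  · have h5 : 5 ^ v ≤ p ^ v := Nat.pow_le_pow_left hp5 v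
    have := five_pow_aux v h1
    omega

private lemma padicNorm_natCast_inv (p : ℕ) [hp : Fact p.Prime] {j : ℕ} (hj : j ≠ 0) :
    padicNorm p ((j : ℚ))⁻¹ = (p : ℚ) ^ (padicValNat p j : ℤ) := by
  have hj' : (j : ℚ) ≠ 0 := Nat.cast_ne_zero.mpr hj
  rw [← one_div, padicNorm.div, padicNorm.one,
    padicNorm.eq_zpow_of_nonzero hj', padicValRat.of_nat, one_div, ← zpow_neg, neg_neg]

private lemma padicNorm_pow (p : ℕ) [hp : Fact p.Prime] (q : ℚ) (n : ℕ) :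
    padicNorm p (q ^ n) = padicNorm p q ^ n := by
  induction n with
  | zero => simp
  | succ n ih => rw [pow_succ, pow_succ, padicNorm.mul, ih]

/-- Main induction: `‖∑_{x<p} x^m − p·B_m‖_p ≤ 1/p`. -/
private lemma key_bound (p : ℕ) [hp : Fact p.Prime] (hp5 : 5 ≤ p) : ∀ m : ℕ,
    padicNorm p ((∑ x ∈ range p, (x : ℚ) ^ m) - p * bernoulli m) ≤ (p : ℚ)⁻¹ := by
  have hp1 : (1 : ℚ) < p := by exact_mod_cast hp.out.one_lt
  have hp0 : (0 : ℚ) < p := by positivity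
  intro m
  induction m using Nat.strong_induction_on with
  | _ m ih =>
    -- norm bound for earlier Bernoulli numbers
    have hB : ∀ i, i < m → padicNorm p (bernoulli i) ≤ p := by
      intro i him
      have hS : padicNorm p (∑ x ∈ range p, (x : ℚ) ^ i) ≤ 1 := by
        have : (∑ x ∈ range p, (x : ℚ) ^ i) = ((∑ x ∈ range p, x ^ i : ℕ) : ℚ) := by
          push_cast; ring
        rw [this]
        exact padicNorm.of_nat _
      have hdiff := ih i him
      have heq : (p : ℚ) * bernoulli i =
          (∑ x ∈ range p, (x : ℚ) ^ i) - ((∑ x ∈ range p, (x : ℚ) ^ i) - p * bernoulli i) := by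
        ring
      have hle : padicNorm p ((p : ℚ) * bernoulli i) ≤ 1 := by
        rw [heq]
        refine le_trans padicNorm.sub (max_le hS (le_trans hdiff ?_))
        exact inv_le_one_of_one_le₀ hp1.le
      rw [padicNorm.mul, padicNorm.padicNorm_p hp.out.one_lt] at hle
      calc padicNorm p (bernoulli i) = p * ((p:ℚ)⁻¹ * padicNorm p (bernoulli i)) := by
            field_simp
        _ ≤ p * 1 := by
            exact mul_le_mul_of_nonneg_left hle hp0.le
        _ = p := mul_one _
    rw [sum_range_pow p m, Finset.sum_range_succ]
    have hm1 : ((m : ℚ) + 1) ≠ 0 := by positivity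
    have hlast : bernoulli m * ((m + 1).choose m : ℚ) * (p : ℚ) ^ (m + 1 - m) / (m + 1)
        = (p : ℚ) * bernoulli m := by
      rw [Nat.choose_succ_self_right, Nat.add_sub_cancel_left, pow_one]
      push_cast
      field_simp
    rw [hlast, add_sub_cancel_right]
    refine padicNorm.sum_le' (fun i hi => ?_) (by positivity)
    rw [Finset.mem_range] at hi
    set j := m + 1 - i with hjdef
    have hj2 : 2 ≤ j := by omega
    have hj0 : (j : ℚ) ≠ 0 := by
      have : j ≠ 0 := by omega
      exact_mod_cast this
    -- rewrite the term using choose_mul_succ_eq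
    have hnat : (m.choose i : ℚ) * (m + 1) = ((m + 1).choose i : ℚ) * j := by
      exact_mod_cast congrArg (Nat.cast : ℕ → ℚ) (Nat.choose_mul_succ_eq m i)
    have hdiv : ((m + 1).choose i : ℚ) / (m + 1) = (m.choose i : ℚ) / j := by
      rw [div_eq_div_iff hm1 hj0]
      linarith [hnat]
    have hterm : bernoulli i * ((m + 1).choose i : ℚ) * (p : ℚ) ^ (m + 1 - i) / (m + 1)
        = bernoulli i * ((m.choose i : ℚ) * ((p : ℚ) ^ j * ((j : ℚ))⁻¹)) := by
      calc bernoulli i * ((m + 1).choose i : ℚ) * (p : ℚ) ^ (m + 1 - i) / (m + 1)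
          = bernoulli i * (p : ℚ) ^ (m + 1 - i) * (((m + 1).choose i : ℚ) / (m + 1)) := by
            ring
        _ = bernoulli i * (p : ℚ) ^ (m + 1 - i) * ((m.choose i : ℚ) / j) := by rw [hdiv]
        _ = _ := by rw [← hjdef]; ring
    rw [hterm, padicNorm.mul, padicNorm.mul, padicNorm.mul, padicNorm_pow,
      padicNorm.padicNorm_p hp.out.one_lt, padicNorm_natCast_inv p (by omega : j ≠ 0)]
    set v := padicValNat p j with hv
    have hvj : v + 2 ≤ j := val_le_sub_two p hp5 hj2
    have hBi := hB i hi
    have hCh : padicNorm p (m.choose i : ℚ) ≤ 1 := padicNorm.of_nat _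
    have hnonneg₁ : (0:ℚ) ≤ padicNorm p (m.choose i : ℚ) := padicNorm.nonneg _
    have hpow : ((p:ℚ)⁻¹) ^ j * (p:ℚ) ^ (v : ℤ) = (p:ℚ) ^ ((v : ℤ) - j) := by
      rw [← zpow_natCast ((p:ℚ)⁻¹) j, ← zpow_neg_one, ← zpow_mul]
      rw [← zpow_add₀ (ne_of_gt hp0)]
      congr 1
      ring
    calc padicNorm p (bernoulli i) * (padicNorm p (m.choose i : ℚ) *
            ((p:ℚ)⁻¹ ^ j * (p:ℚ) ^ (v : ℤ)))
        ≤ (p:ℚ) * (1 * ((p:ℚ)⁻¹ ^ j * (p:ℚ) ^ (v : ℤ))) := by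
          have hfac : (0:ℚ) ≤ (p:ℚ)⁻¹ ^ j * (p:ℚ) ^ (v : ℤ) := by positivity
          have h1 : padicNorm p (m.choose i : ℚ) * ((p:ℚ)⁻¹ ^ j * (p:ℚ) ^ (v : ℤ))
              ≤ 1 * ((p:ℚ)⁻¹ ^ j * (p:ℚ) ^ (v : ℤ)) :=
            mul_le_mul_of_nonneg_right hCh hfac
          have h2 : (0:ℚ) ≤ 1 * ((p:ℚ)⁻¹ ^ j * (p:ℚ) ^ (v : ℤ)) := by positivity
          exact mul_le_mul hBi h1 (mul_nonneg hnonneg₁ hfac) hp0.le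
      _ = (p:ℚ) ^ ((1 : ℤ) + ((v : ℤ) - j)) := by
          rw [one_mul, hpow, zpow_add₀ (ne_of_gt hp0), zpow_one]
      _ ≤ (p:ℚ) ^ (-1 : ℤ) := by
          apply zpow_le_zpow_right₀ hp1.le
          omega
      _ = (p:ℚ)⁻¹ := by rw [zpow_neg_one]

theorem padicValNat_den_bernoulli_div
    (p k : ℕ) (hp : p.Prime) (hp5 : 5 ≤ p) (hk : 1 ≤ k) :
    padicValNat p ((bernoulli ((p - 1) * k) / (2 * ((p - 1) * k : ℕ) : ℚ)).den) =
      padicValNat p k + 1 := by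
  haveI : Fact p.Prime := ⟨hp⟩
  set s := (p - 1) * k with hs
  have hs0 : s ≠ 0 := by
    have : p - 1 ≠ 0 := by omega
    positivity
  have hp1 : (1 : ℚ) < p := by exact_mod_cast hp.one_lt
  have hp0 : (0 : ℚ) < p := by positivity
  -- Step 1: the power sum is a p-adic unit
  set N : ℕ := ∑ x ∈ range p, x ^ s with hN
  have hNdvd : ¬ p ∣ N := by
    rw [← ZMod.natCast_eq_zero_iff]
    have hcast : ((N : ℕ) : ZMod p) = ∑ x ∈ range p, (x : ZMod p) ^ s := by
      push_cast [hN]; ring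
    rw [hcast]
    haveI : Fact (1 < p) := ⟨hp.one_lt⟩
    have hterm1 : ∀ x ∈ range p, (x : ZMod p) ^ s
        = 1 - (if x = 0 then (1 : ZMod p) else 0) := by
      intro x hx
      rw [Finset.mem_range] at hx
      by_cases h0 : x = 0
      · simp [h0, zero_pow hs0]
      · simp only [h0, if_false, sub_zero]
        have hne : ((x : ℕ) : ZMod p) ≠ 0 := by
          rw [Ne, ZMod.natCast_eq_zero_iff]
          intro hdvd
          have := Nat.le_of_dvd (by omega) hdvd
          omega
        rw [hs, pow_mul, ZMod.pow_card_sub_one_eq_one hne, one_pow]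
    rw [Finset.sum_congr rfl hterm1, Finset.sum_sub_distrib,
      Finset.sum_ite_eq' (range p) 0 (fun _ => (1 : ZMod p)),
      Finset.sum_const, Finset.card_range]
    have hmem : (0 : ℕ) ∈ range p := Finset.mem_range.mpr hp.pos
    rw [if_pos hmem, nsmul_eq_mul, mul_one, ZMod.natCast_self, zero_sub]
    simp
  have hSnorm : padicNorm p ((N : ℚ)) = 1 := (padicNorm.nat_eq_one_iff _).mpr hNdvd
  -- Step 2: valuation of bernoulli s is -1
  have hkey := key_bound p hp5 s
  have hScast : (∑ x ∈ range p, (x : ℚ) ^ s) = (N : ℚ) := by push_cast [hN]; ring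
  rw [hScast] at hkey
  have hinvlt : (p : ℚ)⁻¹ < 1 := inv_lt_one_of_one_lt₀ hp1
  have hmaxeq : padicNorm p ((p : ℚ) * bernoulli s) = 1 := by
    have heq : (p : ℚ) * bernoulli s = (N : ℚ) + (-(((N : ℚ)) - p * bernoulli s)) := by ring
    rw [heq]
    have hDne : padicNorm p ((N : ℚ)) ≠ padicNorm p (-(((N : ℚ)) - p * bernoulli s)) := by
      rw [padicNorm.neg, hSnorm]
      intro hcontra
      rw [← hcontra] at hkey
      linarith
    rw [padicNorm.add_eq_max_of_ne hDne, padicNorm.neg, hSnorm]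
    have : padicNorm p ((N : ℚ) - p * bernoulli s) < 1 := lt_of_le_of_lt hkey hinvlt
    exact max_eq_left this.le
  rw [padicNorm.mul, padicNorm.padicNorm_p hp.one_lt] at hmaxeq
  have hBnorm : padicNorm p (bernoulli s) = p := by
    field_simp at hmaxeq
    linarith [hmaxeq]
  have hBne : bernoulli s ≠ 0 := by
    intro h
    rw [h, padicNorm.zero] at hBnorm
    linarith
  have hBval : padicValRat p (bernoulli s) = -1 := by
    have := padicNorm.eq_zpow_of_nonzero (p := p) hBne
    rw [hBnorm] at this
    have h1 : (p : ℚ) ^ (1 : ℤ) = (p : ℚ) ^ (-padicValRat p (bernoulli s)) := by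
      rw [zpow_one]; exact this
    have := zpow_right_injective₀ hp0 (ne_of_gt hp1) h1
    omega
  -- Step 3: valuation of the denominator 2s
  have h2s : (2 * (s : ℕ) : ℚ) = ((2 * s : ℕ) : ℚ) := by push_cast; ring
  have h2s0 : ((2 * s : ℕ) : ℚ) ≠ 0 := by
    have : 2 * s ≠ 0 := by omega
    exact_mod_cast this
  have hval2s : padicValRat p ((2 * s : ℕ) : ℚ) = padicValNat p k := by
    rw [padicValRat.of_nat]
    rw [hs, ← mul_assoc]
    rw [padicValNat.mul (p := p) (a := 2 * (p - 1)) (b := k) (by omega) (by omega),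
      padicValNat.mul (p := p) (a := 2) (b := p - 1) (by omega) (by omega)]
    have h2 : padicValNat p 2 = 0 :=
      padicValNat.eq_zero_of_not_dvd
        (fun h => absurd (Nat.le_of_dvd (by norm_num) h) (by omega))
    have hpm1 : padicValNat p (p - 1) = 0 := by
      apply padicValNat.eq_zero_of_not_dvd
      intro hdvd
      have := Nat.le_of_dvd (by omega) hdvd
      omega
    rw [h2, hpm1]
    simp
  -- Step 4: combine
  set q : ℚ := bernoulli s / (2 * (s : ℕ) : ℚ) with hq
  have hqval : padicValRat p q = -1 - padicValNat p k := by
    rw [hq, h2s, padicValRat.div (p := p) hBne h2s0, hBval, hval2s]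
  have hqne : q ≠ 0 := by
    rw [hq, h2s]
    exact div_ne_zero hBne h2s0
  have hdef : padicValRat p q = padicValInt p q.num - padicValNat p q.den :=
    padicValRat_def p q
  -- p divides the denominator
  have hdenpos : 0 < q.den := q.pos
  have hnum : padicValInt p q.num = padicValNat p q.num.natAbs := rfl
  have hpden : (padicValNat p q.den : ℤ) = padicValNat p q.num.natAbs + padicValNat p k + 1 := by
    rw [hdef, hnum] at hqval
    omega
  have hdvdden : p ∣ q.den := by
    by_contra hnd
    have : padicValNat p q.den = 0 := padicValNat.eq_zero_of_not_dvd hnd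
    omega
  have hnumzero : padicValNat p q.num.natAbs = 0 := by
    apply padicValNat.eq_zero_of_not_dvd
    intro hdvd
    have hcop : Nat.Coprime q.num.natAbs q.den := q.reduced
    have : p ∣ Nat.gcd q.num.natAbs q.den := Nat.dvd_gcd hdvd hdvdden
    have h1 : p ∣ 1 := hcop ▸ this
    have := Nat.le_of_dvd Nat.one_pos h1
    have := hp.one_lt
    omega
  omega
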